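/- Fix a dimension d ≥ 1 and let μ be the uniform probability measure on the closed unit ball of EuclideanSpace ℝ (Fin d). There exists a constant C > 0, depending only on d, such that for every n ≥ 2, if X_1, …, X_n are independent random points each distributed according to μ (equivalently, integrating over the product measure μ^n), then the expected nearest-neighbour distance satisfies E[ min_{2 ≤ j ≤ n} ‖X_1 − X_j‖ ] ≤ C · n^{−1/d}. -/

import Mathlib

open MeasureTheory Metric Set Real


local notation "E" d => EuclideanSpace ℝ (Fin d)

lemma nn_ball_lb (d : ℕ) (x : EuclideanSpace ℝ (Fin d))
    (hx : x ∈ closedBall (0 : EuclideanSpace ℝ (Fin d)) 1) {t : ℝ} (ht : 0 ≤ t) (ht2 : t ≤ 2) :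
    ENNReal.ofReal ((t/2)^d) * volume (closedBall (0 : EuclideanSpace ℝ (Fin d)) 1)
      ≤ volume (closedBall x t ∩ closedBall 0 1) := by
  set y : EuclideanSpace ℝ (Fin d) := (1 - t/2) • x with hy
  have hxn : ‖x‖ ≤ 1 := by simpa [mem_closedBall, dist_zero_right] using hx
  have h1 : closedBall y (t/2) ⊆ closedBall x t ∩ closedBall 0 1 := by
    intro z hz
    have hzy : dist z y ≤ t/2 := mem_closedBall.mp hz
    have hyx : dist y x ≤ t/2 := by
      rw [dist_eq_norm, hy]
      have : (1 - t/2) • x - x = (-(t/2)) • x := by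
        module
      rw [this, norm_smul]
      calc ‖(-(t/2))‖ * ‖x‖ ≤ ‖(-(t/2))‖ * 1 := by
            exact mul_le_mul_of_nonneg_left hxn (norm_nonneg _)
        _ = t/2 := by rw [mul_one, norm_neg, Real.norm_of_nonneg (by linarith)]
    constructor
    · have := dist_triangle z y x
      simp only [mem_closedBall]
      linarith
    · simp only [mem_closedBall, dist_zero_right]
      have hyn : ‖y‖ ≤ 1 - t/2 := by
        rw [hy, norm_smul, Real.norm_of_nonneg (by linarith)]
        nlinarith
      calc ‖z‖ = ‖z - y + y‖ := by rw [sub_add_cancel]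
        _ ≤ ‖z - y‖ + ‖y‖ := norm_add_le _ _
        _ ≤ t/2 + (1 - t/2) := by
            have : ‖z - y‖ = dist z y := (dist_eq_norm z y).symm
            linarith [this ▸ hzy]
        _ = 1 := by ring
  calc ENNReal.ofReal ((t/2)^d) * volume (closedBall (0 : EuclideanSpace ℝ (Fin d)) 1)
      = volume (closedBall y (t/2)) := by
        rw [Measure.addHaar_closedBall' volume y (by linarith), finrank_euclideanSpace_fin]
    _ ≤ _ := measure_mono h1


lemma nn_vol_pos (d : ℕ) : 0 < volume (closedBall (0 : EuclideanSpace ℝ (Fin d)) 1) :=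
  measure_closedBall_pos volume 0 one_pos

lemma nn_vol_ne_top (d : ℕ) : volume (closedBall (0 : EuclideanSpace ℝ (Fin d)) 1) ≠ ⊤ :=
  measure_closedBall_lt_top.ne

lemma nn_prob (d : ℕ) :
    IsProbabilityMeasure
      ((volume (closedBall (0 : EuclideanSpace ℝ (Fin d)) 1))⁻¹ •
        volume.restrict (closedBall (0 : EuclideanSpace ℝ (Fin d)) 1)) := by
  constructor
  rw [Measure.smul_apply, Measure.restrict_apply MeasurableSet.univ, Set.univ_inter,
    smul_eq_mul, ENNReal.inv_mul_cancel (nn_vol_pos d).ne' (nn_vol_ne_top d)]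

lemma nn_tail (d : ℕ) (x : EuclideanSpace ℝ (Fin d))
    (hx : x ∈ closedBall (0 : EuclideanSpace ℝ (Fin d)) 1) {t : ℝ} (ht : 0 < t) :
    ((volume (closedBall (0 : EuclideanSpace ℝ (Fin d)) 1))⁻¹ •
        volume.restrict (closedBall (0 : EuclideanSpace ℝ (Fin d)) 1))
      {z | t < dist x z}
    ≤ ENNReal.ofReal (Real.exp (-((t/2)^d))) := by
  set v := volume (closedBall (0 : EuclideanSpace ℝ (Fin d)) 1) with hv
  set μ := v⁻¹ • volume.restrict (closedBall (0 : EuclideanSpace ℝ (Fin d)) 1) with hμ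
  have hset : {z : EuclideanSpace ℝ (Fin d) | t < dist x z} = (closedBall x t)ᶜ := by
    ext z; simp [mem_closedBall, dist_comm, not_le]
  rcases le_or_gt t 2 with ht2 | ht2
  · -- use the ball lower bound
    have hlb : ENNReal.ofReal ((t/2)^d) ≤ μ (closedBall x t) := by
      rw [hμ, Measure.smul_apply, Measure.restrict_apply measurableSet_closedBall, smul_eq_mul]
      have h1 := nn_ball_lb d x hx ht.le ht2
      calc ENNReal.ofReal ((t/2)^d)
          = v⁻¹ * (ENNReal.ofReal ((t/2)^d) * v) := by
            rw [← mul_assoc, mul_comm v⁻¹, mul_assoc, ENNReal.inv_mul_cancel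
              (nn_vol_pos d).ne' (nn_vol_ne_top d), mul_one]
        _ ≤ v⁻¹ * volume (closedBall x t ∩ closedBall 0 1) :=
            mul_le_mul_right h1 _
    have := nn_prob d
    rw [hset, prob_compl_eq_one_sub measurableSet_closedBall]
    calc 1 - μ (closedBall x t) ≤ 1 - ENNReal.ofReal ((t/2)^d) := tsub_le_tsub_left hlb 1
      _ = ENNReal.ofReal (1 - (t/2)^d) := by
          rw [ENNReal.ofReal_sub _ (by positivity), ENNReal.ofReal_one]
      _ ≤ ENNReal.ofReal (Real.exp (-((t/2)^d))) := by
          apply ENNReal.ofReal_le_ofReal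
          linarith [Real.add_one_le_exp (-((t/2)^d))]
  · -- t > 2 : the set misses the ball entirely
    have hempty : (closedBall x t)ᶜ ∩ closedBall (0 : EuclideanSpace ℝ (Fin d)) 1 = ∅ := by
      ext z
      simp only [Set.mem_inter_iff, Set.mem_compl_iff, mem_closedBall, Set.mem_empty_iff_false,
        iff_false, not_and, not_le, dist_zero_right]
      intro hzx
      by_contra hz
      push_neg at hz
      have hxn : ‖x‖ ≤ 1 := by simpa [mem_closedBall, dist_zero_right] using hx
      have : dist z x ≤ 2 := by
        calc dist z x ≤ ‖z‖ + ‖x‖ := by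
              rw [dist_eq_norm]; exact norm_sub_le _ _
          _ ≤ 2 := by linarith
      linarith
    rw [hset, hμ, Measure.smul_apply, Measure.restrict_apply measurableSet_closedBall.compl,
      hempty, measure_empty, smul_eq_mul, mul_zero]
    exact zero_le
lemma nn_prod_tail (d m : ℕ) {t : ℝ} (ht : 0 < t) :
    (Measure.pi fun _ : Fin (m+2) =>
        (volume (closedBall (0 : EuclideanSpace ℝ (Fin d)) 1))⁻¹ •
          volume.restrict (closedBall (0 : EuclideanSpace ℝ (Fin d)) 1))
      {x : Fin (m+2) → EuclideanSpace ℝ (Fin d) | ∀ j : Fin (m+2), j ≠ 0 → t < dist (x 0) (x j)}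
    ≤ ENNReal.ofReal (Real.exp (-((m+1 : ℝ) * (t/2)^d))) := by
  set μ := (volume (closedBall (0 : EuclideanSpace ℝ (Fin d)) 1))⁻¹ •
      volume.restrict (closedBall (0 : EuclideanSpace ℝ (Fin d)) 1) with hμ
  haveI : IsProbabilityMeasure μ := nn_prob d
  set e := MeasurableEquiv.piFinSuccAbove (fun _ : Fin (m+2) => EuclideanSpace ℝ (Fin d)) 0
    with he
  have hmp := measurePreserving_piFinSuccAbove (fun _ : Fin (m+2) => μ) 0
  set A : Set (EuclideanSpace ℝ (Fin d) × (Fin (m+1) → EuclideanSpace ℝ (Fin d))) :=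
    {p | ∀ j : Fin (m+1), t < dist p.1 (p.2 j)} with hA
  have hAmeas : MeasurableSet A := by
    have : A = ⋂ j : Fin (m+1), {p : EuclideanSpace ℝ (Fin d) ×
        (Fin (m+1) → EuclideanSpace ℝ (Fin d)) | t < dist p.1 (p.2 j)} := by
      ext p; simp [hA]
    rw [this]
    refine MeasurableSet.iInter fun j => ?_
    exact measurableSet_lt measurable_const
      (measurable_fst.dist ((measurable_pi_apply j).comp measurable_snd))
  have hSA : {x : Fin (m+2) → EuclideanSpace ℝ (Fin d) |
      ∀ j : Fin (m+2), j ≠ 0 → t < dist (x 0) (x j)} = e ⁻¹' A := by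
    ext x
    show (∀ j : Fin (m+2), j ≠ 0 → t < dist (x 0) (x j))
      ↔ ∀ j : Fin (m+1), t < dist (x 0) (x j.succ)
    constructor
    · intro h j; exact h j.succ (Fin.succ_ne_zero j)
    · intro h j hj
      obtain ⟨k, rfl⟩ := Fin.exists_succ_eq.mpr hj
      exact h k
  rw [hSA, hmp.measure_preimage hAmeas.nullMeasurableSet, Measure.prod_apply hAmeas]
  have hsec : ∀ x0 : EuclideanSpace ℝ (Fin d), Prod.mk x0 ⁻¹' A
      = Set.pi Set.univ (fun _ : Fin (m+1) => {z : EuclideanSpace ℝ (Fin d) | t < dist x0 z}) := by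
    intro x0; ext y; simp [hA, Set.mem_pi]
  calc ∫⁻ x0, (Measure.pi fun _ : Fin (m+1) => μ) (Prod.mk x0 ⁻¹' A) ∂μ
      ≤ ∫⁻ _x0, ENNReal.ofReal (Real.exp (-((t/2)^d))) ^ (m+1) ∂μ := by
        refine lintegral_mono_ae ?_
        filter_upwards [Measure.ae_smul_measure (ae_restrict_mem measurableSet_closedBall) _] with x0 hx0
        rw [hsec x0, Measure.pi_pi]
        rw [Finset.prod_const, Finset.card_univ, Fintype.card_fin]
        exact pow_le_pow_left' (nn_tail d x0 hx0 ht) _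
    _ = ENNReal.ofReal (Real.exp (-((t/2)^d))) ^ (m+1) := by
        rw [lintegral_const, measure_univ, mul_one]
    _ = ENNReal.ofReal (Real.exp (-((m+1 : ℝ) * (t/2)^d))) := by
        rw [← ENNReal.ofReal_pow (Real.exp_nonneg _), ← Real.exp_nat_mul]
        congr 1
        push_cast; ring
lemma nn_calc (d : ℕ) (hd : 1 ≤ d) (c : ℝ) (hc : 0 < c) :
    ∫⁻ t in Set.Ioi (0:ℝ), ENNReal.ofReal (Real.exp (-(c * (t/2)^d)))
      = ENNReal.ofReal ((c / 2^d) ^ (-1/(d:ℝ)) * Real.Gamma (1/(d:ℝ) + 1)) := by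
  have hdR : (0:ℝ) < d := by exact_mod_cast hd
  set b : ℝ := c / 2^d with hb
  have hbpos : 0 < b := by positivity
  have h1 : ∀ t ∈ Set.Ioi (0:ℝ), ENNReal.ofReal (Real.exp (-(c * (t/2)^d)))
      = ENNReal.ofReal (Real.exp (-b * t ^ (d:ℝ))) := by
    intro t _
    congr 1
    rw [Real.rpow_natCast]
    congr 1
    rw [div_pow, hb]
    ring
  rw [setLIntegral_congr_fun measurableSet_Ioi h1]
  have hInt : IntegrableOn (fun t : ℝ => Real.exp (-b * t ^ (d:ℝ))) (Set.Ioi 0) := by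
    have h := integrableOn_rpow_mul_exp_neg_mul_rpow (p := (d:ℝ)) (s := 0)
      (by norm_num) (by exact_mod_cast hd) hbpos
    refine h.congr_fun (fun t ht => ?_) measurableSet_Ioi
    dsimp only; rw [Real.rpow_zero, one_mul]
  rw [← ofReal_integral_eq_lintegral_ofReal hInt
    (Filter.Eventually.of_forall fun t => Real.exp_nonneg _)]
  rw [integral_exp_neg_mul_rpow hdR hbpos]
set_option maxHeartbeats 2000000 in
theorem expected_nearest_neighbour_upper (d : ℕ) (hd : 1 ≤ d) :
    ∃ C : ℝ, 0 < C ∧ ∀ n : ℕ, ∀ hn : 2 ≤ n,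
      (∫ x : Fin n → EuclideanSpace ℝ (Fin d),
          (⨅ j : {j : Fin n // j ≠ ⟨0, by omega⟩}, ‖x ⟨0, by omega⟩ - x (j : Fin n)‖)
        ∂(Measure.pi fun _ : Fin n =>
            (volume (Metric.closedBall (0 : EuclideanSpace ℝ (Fin d)) 1))⁻¹ •
              volume.restrict (Metric.closedBall (0 : EuclideanSpace ℝ (Fin d)) 1)))
      ≤ C * (n : ℝ) ^ (-(1 / (d : ℝ))) := by
  have hdR : (0:ℝ) < d := by exact_mod_cast hd
  set Γd := Real.Gamma (1/(d:ℝ) + 1) with hΓ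
  have hΓpos : 0 < Γd := Real.Gamma_pos_of_pos (by positivity)
  refine ⟨4 * Γd, by positivity, ?_⟩
  intro n hn
  obtain ⟨m, rfl⟩ : ∃ m, n = m + 2 := ⟨n - 2, by omega⟩
  simp only [Fin.zero_eta]
  set μ := (volume (Metric.closedBall (0 : EuclideanSpace ℝ (Fin d)) 1))⁻¹ •
      volume.restrict (Metric.closedBall (0 : EuclideanSpace ℝ (Fin d)) 1) with hμ
  haveI : IsProbabilityMeasure μ := nn_prob d
  set P := Measure.pi fun _ : Fin (m+2) => μ with hP
  set f : (Fin (m+2) → EuclideanSpace ℝ (Fin d)) → ℝ :=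
    fun x => ⨅ j : {j : Fin (m+2) // j ≠ 0}, ‖x 0 - x (j : Fin (m+2))‖ with hf
  have hfm : Measurable f := by
    refine Measurable.iInf fun j => ?_
    have h0 : Measurable fun x : Fin (m+2) → EuclideanSpace ℝ (Fin d) => x 0 :=
      measurable_pi_apply 0
    have hj : Measurable fun x : Fin (m+2) → EuclideanSpace ℝ (Fin d) => x (j : Fin (m+2)) :=
      measurable_pi_apply _
    exact (h0.sub hj).norm
  have hf0 : ∀ x, 0 ≤ f x := fun x => Real.iInf_nonneg fun j => norm_nonneg _
  rw [integral_eq_lintegral_of_nonneg_ae (Filter.Eventually.of_forall hf0)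
    hfm.aestronglyMeasurable]
  rw [lintegral_eq_lintegral_meas_lt P (Filter.Eventually.of_forall hf0) hfm.aemeasurable]
  have key : ∫⁻ t in Set.Ioi (0:ℝ), P {x | t < f x}
      ≤ ENNReal.ofReal (((m+1:ℝ) / 2^d) ^ (-1/(d:ℝ)) * Γd) := by
    rw [← nn_calc d hd (m+1:ℝ) (by positivity)]
    refine lintegral_mono_ae ?_
    filter_upwards [ae_restrict_mem measurableSet_Ioi] with t ht
    have hsub : {x : Fin (m+2) → EuclideanSpace ℝ (Fin d) | t < f x}
        ⊆ {x : Fin (m+2) → EuclideanSpace ℝ (Fin d) |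
            ∀ j : Fin (m+2), j ≠ 0 → t < dist (x 0) (x j)} := by
      intro x hx j hj
      have hbdd : BddBelow (Set.range fun j : {j : Fin (m+2) // j ≠ 0} =>
          ‖x 0 - x (j : Fin (m+2))‖) := ⟨0, fun y ⟨j, hj⟩ => hj ▸ norm_nonneg _⟩
      have := ciInf_le hbdd (⟨j, hj⟩ : {j : Fin (m+2) // j ≠ 0})
      rw [dist_eq_norm]
      exact lt_of_lt_of_le hx this
    calc P {x | t < f x}
        ≤ P {x : Fin (m+2) → EuclideanSpace ℝ (Fin d) |
            ∀ j : Fin (m+2), j ≠ 0 → t < dist (x 0) (x j)} := measure_mono hsub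
      _ ≤ ENNReal.ofReal (Real.exp (-((m+1:ℝ) * (t/2)^d))) := nn_prod_tail d m ht
  have hR0 : (0:ℝ) ≤ ((m+1:ℝ) / 2^d) ^ (-1/(d:ℝ)) * Γd := by positivity
  refine le_trans (ENNReal.toReal_le_of_le_ofReal hR0 key) ?_
  -- now pure real arithmetic
  have hc : (0:ℝ) < (m+1:ℝ) := by positivity
  have hsplit : ((m+1:ℝ) / 2^d) ^ (-1/(d:ℝ)) = 2 * (m+1:ℝ) ^ (-1/(d:ℝ)) := by
    rw [Real.div_rpow hc.le (by positivity)]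
    have h2 : ((2:ℝ)^d) ^ (-1/(d:ℝ)) = 2⁻¹ := by
      rw [← Real.rpow_natCast 2 d, ← Real.rpow_mul (by norm_num)]
      rw [show (d:ℝ) * (-1/(d:ℝ)) = -1 by field_simp]
      norm_num
    rw [h2]
    field_simp
  rw [hsplit]
  have hmono : (m+1:ℝ) ^ (-1/(d:ℝ)) ≤ 2 * ((m+2:ℕ):ℝ) ^ (-(1/(d:ℝ))) := by
    push_cast
    have hN : (0:ℝ) < (m+2:ℝ) := by positivity
    have h1 : ((m+2:ℝ)) ^ (1/(d:ℝ)) ≤ 2 * (m+1:ℝ) ^ (1/(d:ℝ)) := by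
      have h2d : (m+2:ℝ) ≤ 2^d * (m+1:ℝ) := by
        have : (2:ℝ) ≤ 2^d := by
          calc (2:ℝ) = 2^1 := (pow_one 2).symm
            _ ≤ 2^d := pow_le_pow_right₀ (by norm_num) hd
        nlinarith
      calc ((m+2:ℝ)) ^ (1/(d:ℝ)) ≤ (2^d * (m+1:ℝ)) ^ (1/(d:ℝ)) :=
            Real.rpow_le_rpow hN.le h2d (by positivity)
        _ = ((2:ℝ)^d) ^ (1/(d:ℝ)) * (m+1:ℝ) ^ (1/(d:ℝ)) :=
            Real.mul_rpow (by positivity) hc.le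
        _ = 2 * (m+1:ℝ) ^ (1/(d:ℝ)) := by
            rw [← Real.rpow_natCast 2 d, ← Real.rpow_mul (by norm_num)]
            rw [show (d:ℝ) * (1/(d:ℝ)) = 1 by field_simp]
            norm_num
    have hpos1 : (0:ℝ) < (m+1:ℝ) ^ (1/(d:ℝ)) := Real.rpow_pos_of_pos hc _
    have hpos2 : (0:ℝ) < (m+2:ℝ) ^ (1/(d:ℝ)) := Real.rpow_pos_of_pos hN _
    rw [show (-1/(d:ℝ)) = -(1/(d:ℝ)) by ring, Real.rpow_neg hc.le, Real.rpow_neg hN.le]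
    have h2 : (2 * (m+1:ℝ) ^ (1/(d:ℝ)))⁻¹ ≤ ((m+2:ℝ) ^ (1/(d:ℝ)))⁻¹ :=
      inv_anti₀ hpos2 h1
    calc ((m+1:ℝ) ^ (1/(d:ℝ)))⁻¹ = 2 * (2 * (m+1:ℝ) ^ (1/(d:ℝ)))⁻¹ := by
          rw [mul_inv]; ring
      _ ≤ 2 * ((m+2:ℝ) ^ (1/(d:ℝ)))⁻¹ := by linarith
  calc 2 * (m+1:ℝ) ^ (-1/(d:ℝ)) * Γd ≤ 2 * (2 * ((m+2:ℕ):ℝ) ^ (-(1/(d:ℝ)))) * Γd := by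
        have := hmono
        nlinarith [hΓpos.le, Real.rpow_pos_of_pos (show (0:ℝ) < ((m+2:ℕ):ℝ) by positivity) (-(1/(d:ℝ)))]
    _ = 4 * Γd * ((m+2:ℕ):ℝ) ^ (-(1/(d:ℝ))) := by ring
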